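/- Let 1 < α < 2, β ∈ (0, α−1), L > 0 and C > 0. Let k : (0,∞)×[0,L]×[0,L] → [0,∞) be a measurable function satisfying k(s,x,y) ≤ C s/(s^{1/α}+|y−x|)^{1+α} for all s > 0 and x, y ∈ [0,L]. Then there exists a constant c > 0 depending only on α, β and C such that for every γ < 0, sup_{t ≥ 0, x ∈ [0,L]} ∫₀^t e^{γ s} s^{−2β/α} ∫₀^L k(s,x,y)^{2−β} dy ds ≤ c |γ|^{(β+1−α)/α}. -/

import Mathlib

open MeasureTheory Set Filter

private lemma emb_add (a : ℝ) : MeasurableEmbedding (fun x : ℝ => x + a) :=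
  (Homeomorph.addRight a).isClosedEmbedding.measurableEmbedding

private lemma mp_add (a : ℝ) : MeasurePreserving (fun x : ℝ => x + a) volume volume :=
  measurePreserving_add_right volume a

private lemma preim_add (a c : ℝ) : (fun x : ℝ => x + a) ⁻¹' (Ioi (c + a)) = Ioi c := by
  ext x
  simp only [mem_preimage, mem_Ioi]
  constructor <;> intro h <;> linarith

private lemma shift_Ioi_integral (f : ℝ → ℝ) (a c : ℝ) :
    ∫ x in Ioi c, f (x + a) = ∫ x in Ioi (c + a), f x := by
  have h := MeasurableEmbedding.setIntegral_map (μ := volume) (emb_add a) f (Ioi (c + a))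
  rw [(mp_add a).map_eq, preim_add a c] at h
  exact h.symm

private lemma shift_Ioi_integrableOn {f : ℝ → ℝ} {a c : ℝ}
    (h : IntegrableOn f (Ioi (c + a))) :
    IntegrableOn (fun x => f (x + a)) (Ioi c) := by
  have := ((mp_add a).integrableOn_comp_preimage (emb_add a)
      (f := f) (s := Ioi (c + a))).2 h
  rwa [preim_add a c] at this

private lemma neg_Iic_integrableOn {f : ℝ → ℝ} {c : ℝ}
    (h : IntegrableOn f (Ioi (-c))) :
    IntegrableOn (fun x => f (-x)) (Iic c) := by
  have hemb : MeasurableEmbedding (fun x : ℝ => -x) :=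
    (Homeomorph.neg ℝ).isClosedEmbedding.measurableEmbedding
  have hmp : MeasurePreserving (fun x : ℝ => -x) volume volume :=
    Measure.measurePreserving_neg volume
  have h' : IntegrableOn f (Ici (-c)) := by
    rwa [integrableOn_Ici_iff_integrableOn_Ioi]
  have := (hmp.integrableOn_comp_preimage hemb (f := f) (s := Ici (-c))).2 h'
  have hpre : (fun x : ℝ => -x) ⁻¹' (Ici (-c)) = Iic c := by
    ext x; simp only [mem_preimage, mem_Ici, mem_Iic]; constructor <;> intro h <;> linarith
  rwa [hpre] at this

private lemma abs_kernel (a q x : ℝ) (ha : 0 < a) (hq : 1 < q) :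
    Integrable (fun y : ℝ => (a + |y - x|) ^ (-q)) ∧
    ∫ y : ℝ, (a + |y - x|) ^ (-q) = 2 * (a ^ (1 - q) / (q - 1)) := by
  set f : ℝ → ℝ := fun v => v ^ (-q) with hf
  have h0 : IntegrableOn f (Ioi a) := integrableOn_Ioi_rpow_of_lt (by linarith) ha
  have h0val : ∫ v in Ioi a, f v = a ^ (1 - q) / (q - 1) := by
    rw [hf]
    rw [integral_Ioi_rpow_of_lt (by linarith : -q < -1) ha]
    rw [show -q + 1 = 1 - q by ring, show (1 : ℝ) - q = -(q - 1) by ring]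
    rw [div_neg, neg_div, neg_neg]
  have hIoi : IntegrableOn (fun u : ℝ => (a + u) ^ (-q)) (Ioi 0) := by
    have := shift_Ioi_integrableOn (f := f) (a := a) (c := 0) (by rwa [zero_add])
    exact this.congr_fun (fun u _ => by simp [hf, add_comm]) measurableSet_Ioi
  have hIoival : ∫ u in Ioi 0, (a + u) ^ (-q) = a ^ (1 - q) / (q - 1) := by
    have := shift_Ioi_integral f a 0
    rw [zero_add] at this
    rw [← h0val, ← this]
    exact setIntegral_congr_fun measurableSet_Ioi (fun u _ => by simp [hf, add_comm])
  -- full line integrability of u ↦ (a + |u|)^(-q)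
  have hIoiAbs : IntegrableOn (fun u : ℝ => (a + |u|) ^ (-q)) (Ioi 0) :=
    hIoi.congr_fun (fun u hu => by rw [abs_of_pos hu]) measurableSet_Ioi
  have hIicAbs : IntegrableOn (fun u : ℝ => (a + |u|) ^ (-q)) (Iic 0) := by
    have h1 : IntegrableOn (fun u : ℝ => (a + u) ^ (-q)) (Ioi (-(0:ℝ))) := by
      rwa [neg_zero]
    have h2 := neg_Iic_integrableOn h1
    exact h2.congr_fun (fun u hu => by
      simp only [abs_of_nonpos (mem_Iic.1 hu)]) measurableSet_Iic
  have hInt : Integrable (fun u : ℝ => (a + |u|) ^ (-q)) := by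
    rw [← integrableOn_univ, ← Iic_union_Ioi (a := (0:ℝ))]
    exact hIicAbs.union hIoiAbs
  have hVal : ∫ u : ℝ, (a + |u|) ^ (-q) = 2 * (a ^ (1 - q) / (q - 1)) := by
    have := integral_comp_abs (f := fun v => (a + v) ^ (-q))
    rw [this, hIoival]
  constructor
  · exact hInt.comp_sub_right x
  · rw [← hVal]
    exact integral_sub_right_eq_self (fun u : ℝ => (a + |u|) ^ (-q)) x

/-- Lemma 3.1: weighted space-time integral bound for a kernel dominated by the
α-stable bound `C s (s^{1/α}+|y-x|)^{-(1+α)}`, uniform over `t ≥ 0`, `x ∈ [0,L]`. -/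
theorem kernel_integral_bound_neg_gamma (α β C : ℝ) (hα1 : 1 < α) (hα2 : α < 2)
    (hβ0 : 0 < β) (hβ : β < α - 1) (hC : 0 < C) :
    ∃ c : ℝ, 0 < c ∧ ∀ L : ℝ, 0 < L → ∀ k : ℝ → ℝ → ℝ → ℝ,
      Measurable (fun q : ℝ × ℝ × ℝ => k q.1 q.2.1 q.2.2) →
      (∀ s : ℝ, 0 < s → ∀ x ∈ Icc (0:ℝ) L, ∀ y ∈ Icc (0:ℝ) L, 0 ≤ k s x y) →
      (∀ s : ℝ, 0 < s → ∀ x ∈ Icc (0:ℝ) L, ∀ y ∈ Icc (0:ℝ) L,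
        k s x y ≤ C * s / (s ^ (1/α) + |y - x|) ^ (1 + α)) →
      ∀ γ : ℝ, γ < 0 → ∀ t : ℝ, 0 ≤ t → ∀ x ∈ Icc (0:ℝ) L,
        (∫ s in Ioc (0:ℝ) t, Real.exp (γ * s) * s ^ (-(2 * β) / α) *
            ∫ y in Icc (0:ℝ) L, k s x y ^ (2 - β))
          ≤ c * |γ| ^ ((β + 1 - α) / α) := by
  have hα0 : (0:ℝ) < α := by linarith
  set p : ℝ := 1 - (β + 1) / α with hp_def
  have hp : 0 < p := by
    have : (β + 1) / α < 1 := (div_lt_one hα0).2 (by linarith)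
    simp only [hp_def]; linarith
  set q : ℝ := (1 + α) * (2 - β) with hq_def
  have h2β : (1:ℝ) < 2 - β := by linarith
  have hq1 : 1 < q := by nlinarith
  set K : ℝ := C ^ (2 - β) * (2 / (q - 1)) with hK_def
  have hKpos : 0 < K := by
    apply mul_pos (Real.rpow_pos_of_pos hC _)
    exact div_pos two_pos (by linarith)
  refine ⟨K * Real.Gamma p, mul_pos hKpos (Real.Gamma_pos_of_pos hp), ?_⟩
  intro L hL k _ hk0 hkb γ hγ t ht x hx
  set b : ℝ := -γ with hb_def
  have hb : 0 < b := by simp only [hb_def]; linarith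
  set G : ℝ → ℝ := fun s => K * (s ^ (p - 1) * Real.exp (-(b * s))) with hG_def
  have hGint : IntegrableOn G (Ioi 0) := by
    have base := integrableOn_rpow_mul_exp_neg_mul_rpow
      (s := p - 1) (p := 1) (b := b) (by linarith) zero_lt_one hb
    have base' : IntegrableOn (fun s : ℝ => s ^ (p - 1) * Real.exp (-(b * s))) (Ioi 0) := by
      refine base.congr_fun (fun s _ => ?_) measurableSet_Ioi
      simp only [Real.rpow_one, neg_mul]
    exact base'.const_mul K
  have hGval : ∫ s in Ioi 0, G s = K * ((1 / b) ^ p * Real.Gamma p) := by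
    rw [hG_def]
    rw [integral_const_mul, Real.integral_rpow_mul_exp_neg_mul_Ioi hp hb]
  -- inner bound
  have h_inner : ∀ s : ℝ, 0 < s →
      (∫ y in Icc (0:ℝ) L, k s x y ^ (2 - β)) ≤ K * s ^ ((β - 1) / α) := by
    intro s hs0
    set a : ℝ := s ^ (1/α) with ha_def
    have ha : 0 < a := Real.rpow_pos_of_pos hs0 _
    obtain ⟨habsInt, habsVal⟩ := abs_kernel a q x ha hq1
    set g : ℝ → ℝ := fun y => (C * s) ^ (2 - β) * (a + |y - x|) ^ (-q) with hg_def
    have hgInt : Integrable g := habsInt.const_mul _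
    have h1 : (∫ y in Icc (0:ℝ) L, k s x y ^ (2 - β)) ≤ ∫ y in Icc (0:ℝ) L, g y := by
      apply integral_mono_of_nonneg
      · filter_upwards [ae_restrict_mem measurableSet_Icc] with y hy
        exact Real.rpow_nonneg (hk0 s hs0 x hx y hy) _
      · exact hgInt.integrableOn
      · filter_upwards [ae_restrict_mem measurableSet_Icc] with y hy
        have hD : (0:ℝ) < a + |y - x| := by positivity
        have hDp : (0:ℝ) < (a + |y - x|) ^ (1 + α) := Real.rpow_pos_of_pos hD _
        have step1 : k s x y ^ (2 - β) ≤ (C * s / (a + |y - x|) ^ (1 + α)) ^ (2 - β) :=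
          Real.rpow_le_rpow (hk0 s hs0 x hx y hy) (hkb s hs0 x hx y hy) (by linarith)
        refine step1.trans_eq ?_
        rw [Real.div_rpow (by positivity) hDp.le, ← Real.rpow_mul hD.le, ← hq_def]
        simp only [hg_def]
        rw [Real.rpow_neg hD.le, div_eq_mul_inv]
    have h2 : ∫ y in Icc (0:ℝ) L, g y ≤ ∫ y : ℝ, g y := by
      apply setIntegral_le_integral hgInt
      filter_upwards with y
      have : (0:ℝ) ≤ a + |y - x| := by positivity
      exact mul_nonneg (Real.rpow_nonneg (by positivity) _) (Real.rpow_nonneg this _)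
    have h3 : ∫ y : ℝ, g y = (C * s) ^ (2 - β) * (2 * (a ^ (1 - q) / (q - 1))) := by
      rw [hg_def, integral_const_mul, habsVal]
    have h4 : (C * s) ^ (2 - β) * (2 * (a ^ (1 - q) / (q - 1))) = K * s ^ ((β - 1) / α) := by
      have hexp : (β - 1) / α = (2 - β) + 1 / α * (1 - q) := by
        rw [hq_def]; field_simp; ring
      rw [Real.mul_rpow hC.le hs0.le, ha_def, ← Real.rpow_mul hs0.le, hexp,
        Real.rpow_add hs0, hK_def]
      ring
    calc (∫ y in Icc (0:ℝ) L, k s x y ^ (2 - β)) ≤ ∫ y in Icc (0:ℝ) L, g y := h1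
      _ ≤ ∫ y : ℝ, g y := h2
      _ = _ := by rw [h3, h4]
  -- outer bound
  have step1 : (∫ s in Ioc (0:ℝ) t, Real.exp (γ * s) * s ^ (-(2 * β) / α) *
      ∫ y in Icc (0:ℝ) L, k s x y ^ (2 - β)) ≤ ∫ s in Ioc (0:ℝ) t, G s := by
    apply integral_mono_of_nonneg
    · filter_upwards [ae_restrict_mem measurableSet_Ioc] with s hs
      have hinner : 0 ≤ ∫ y in Icc (0:ℝ) L, k s x y ^ (2 - β) :=
        setIntegral_nonneg measurableSet_Icc
          (fun y hy => Real.rpow_nonneg (hk0 s hs.1 x hx y hy) _)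
      exact mul_nonneg (mul_nonneg (Real.exp_pos _).le (Real.rpow_nonneg hs.1.le _)) hinner
    · exact hGint.mono_set Ioc_subset_Ioi_self
    · filter_upwards [ae_restrict_mem measurableSet_Ioc] with s hs
      have hle := h_inner s hs.1
      have hnn : (0:ℝ) ≤ Real.exp (γ * s) * s ^ (-(2 * β) / α) :=
        mul_nonneg (Real.exp_pos _).le (Real.rpow_nonneg hs.1.le _)
      calc Real.exp (γ * s) * s ^ (-(2 * β) / α) * ∫ y in Icc (0:ℝ) L, k s x y ^ (2 - β)
          ≤ Real.exp (γ * s) * s ^ (-(2 * β) / α) * (K * s ^ ((β - 1) / α)) :=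
            mul_le_mul_of_nonneg_left hle hnn
        _ = G s := by
            rw [hG_def]
            have hexp : γ * s = -(b * s) := by rw [hb_def]; ring
            have hpow : s ^ (-(2 * β) / α) * s ^ ((β - 1) / α) = s ^ (p - 1) := by
              rw [← Real.rpow_add hs.1]
              congr 1
              rw [hp_def]
              field_simp
              ring
            rw [hexp]
            calc Real.exp (-(b * s)) * s ^ (-(2 * β) / α) * (K * s ^ ((β - 1) / α))
                = K * ((s ^ (-(2 * β) / α) * s ^ ((β - 1) / α)) * Real.exp (-(b * s))) := by ring
              _ = K * (s ^ (p - 1) * Real.exp (-(b * s))) := by rw [hpow]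
  have step2 : ∫ s in Ioc (0:ℝ) t, G s ≤ ∫ s in Ioi (0:ℝ), G s := by
    apply setIntegral_mono_set hGint
    · filter_upwards [ae_restrict_mem measurableSet_Ioi] with s hs
      exact mul_nonneg hKpos.le
        (mul_nonneg (Real.rpow_nonneg (le_of_lt hs) _) (Real.exp_pos _).le)
    · exact HasSubset.Subset.eventuallyLE Ioc_subset_Ioi_self
  have step3 : K * ((1 / b) ^ p * Real.Gamma p) = K * Real.Gamma p * |γ| ^ ((β + 1 - α) / α) := by
    have habs : |γ| = b := by rw [hb_def, abs_of_neg hγ]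
    have hexp2 : (β + 1 - α) / α = -p := by
      rw [hp_def]; field_simp; ring
    rw [habs, hexp2, one_div, Real.inv_rpow hb.le, ← Real.rpow_neg hb.le]
    ring
  calc (∫ s in Ioc (0:ℝ) t, Real.exp (γ * s) * s ^ (-(2 * β) / α) *
      ∫ y in Icc (0:ℝ) L, k s x y ^ (2 - β))
      ≤ ∫ s in Ioc (0:ℝ) t, G s := step1
    _ ≤ ∫ s in Ioi (0:ℝ), G s := step2
    _ = K * ((1 / b) ^ p * Real.Gamma p) := hGval
    _ = K * Real.Gamma p * |γ| ^ ((β + 1 - α) / α) := step3
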